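/- Let f(X) = (13/6)X³ + X² − (1/6)X + 1 and p(X) = 2X³ + X² + 1 in ℚ[X]. Then for every integer s ≥ 0, the polynomial f(X)·p(X)^s has coefficient of X equal to −1/6, coefficient of X² equal to s+1, constant term equal to 1, and the coefficient of X^r is positive for every r with 3 ≤ r ≤ 3s+3. -/
import Mathlib

open Polynomial

private lemma coeff_mul_p (q : Polynomial ℚ) (r : ℕ) :
    (q * (2 * X ^ 3 + X ^ 2 + 1)).coeff r =
      2 * (if 3 ≤ r then q.coeff (r - 3) else 0)
      + (if 2 ≤ r then q.coeff (r - 2) else 0) + q.coeff r := by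
  have h : q * (2 * X ^ 3 + X ^ 2 + 1) = C 2 * (q * X ^ 3) + q * X ^ 2 + q := by
    simp only [map_ofNat]; ring
  rw [h]
  simp [coeff_mul_X_pow']

private lemma main_aux (s : ℕ) :
    ((C (13 / 6) * X ^ 3 + X ^ 2 - C (1 / 6) * X + 1 : Polynomial ℚ) * (2 * X ^ 3 + X ^ 2 + 1) ^ s).coeff 0 = 1 ∧
    ((C (13 / 6) * X ^ 3 + X ^ 2 - C (1 / 6) * X + 1 : Polynomial ℚ) * (2 * X ^ 3 + X ^ 2 + 1) ^ s).coeff 1 = -1 / 6 ∧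
    ((C (13 / 6) * X ^ 3 + X ^ 2 - C (1 / 6) * X + 1 : Polynomial ℚ) * (2 * X ^ 3 + X ^ 2 + 1) ^ s).coeff 2 = (s : ℚ) + 1 ∧
    (∀ r : ℕ, 3 ≤ r → 0 ≤ ((C (13 / 6) * X ^ 3 + X ^ 2 - C (1 / 6) * X + 1 : Polynomial ℚ) * (2 * X ^ 3 + X ^ 2 + 1) ^ s).coeff r) ∧
    (∀ r : ℕ, 3 ≤ r → r ≤ 3 * s + 3 → 0 < ((C (13 / 6) * X ^ 3 + X ^ 2 - C (1 / 6) * X + 1 : Polynomial ℚ) * (2 * X ^ 3 + X ^ 2 + 1) ^ s).coeff r) := by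
  induction s with
  | zero =>
    have hf : ∀ r : ℕ, ((C (13 / 6) * X ^ 3 + X ^ 2 - C (1 / 6) * X + 1 : Polynomial ℚ)).coeff r =
        (if r = 3 then (13/6 : ℚ) else 0) + (if r = 2 then 1 else 0)
        - (if r = 1 then (1/6:ℚ) else 0) + (if r = 0 then 1 else 0) := by
      intro r
      simp only [coeff_add, coeff_sub, coeff_C_mul, coeff_X_pow, coeff_one, coeff_X]
      split_ifs <;> first | omega | ring
    refine ⟨?_, ?_, ?_, ?_, ?_⟩
    · simp only [pow_zero, mul_one, hf]; norm_num
    · simp only [pow_zero, mul_one, hf]; norm_num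
    · simp only [pow_zero, mul_one, hf]; norm_num
    · intro r hr
      simp only [pow_zero, mul_one, hf]
      split_ifs <;> norm_num <;> omega
    · intro r hr hr'
      have : r = 3 := by omega
      subst this
      simp only [pow_zero, mul_one, hf]; norm_num
  | succ n ih =>
    obtain ⟨h0, h1, h2, hnn, hpos⟩ := ih
    set q := (C (13 / 6) * X ^ 3 + X ^ 2 - C (1 / 6) * X + 1 : Polynomial ℚ) * (2 * X ^ 3 + X ^ 2 + 1) ^ n with hqdef
    have hq : (C (13 / 6) * X ^ 3 + X ^ 2 - C (1 / 6) * X + 1 : Polynomial ℚ) * (2 * X ^ 3 + X ^ 2 + 1) ^ (n+1)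
        = q * (2 * X ^ 3 + X ^ 2 + 1) := by rw [hqdef]; ring
    have hn1 : (0:ℚ) ≤ (n:ℚ) := Nat.cast_nonneg n
    refine ⟨?_, ?_, ?_, ?_, ?_⟩
    · rw [hq, coeff_mul_p]; norm_num [h0]
    · rw [hq, coeff_mul_p]; norm_num [h1]
    · rw [hq, coeff_mul_p]; norm_num [h0, h2]; push_cast; ring
    · intro r hr
      rw [hq, coeff_mul_p, if_pos hr, if_pos (by omega : 2 ≤ r)]
      rcases Nat.lt_or_ge r 5 with h5 | h5
      · interval_cases r
        · have := hnn 3 (by norm_num)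
          rw [h0, h1] at *
          norm_num; linarith
        · have := hnn 4 (by norm_num)
          norm_num [h1, h2]; linarith
      · have e3 : 0 ≤ q.coeff (r - 3) := by
          rcases Nat.eq_or_lt_of_le (by omega : 2 ≤ r - 3) with h | h
          · rw [← h, h2]; linarith
          · exact hnn _ (by omega)
        have e2 : 0 ≤ q.coeff (r - 2) := hnn _ (by omega)
        have e0 : 0 ≤ q.coeff r := hnn _ (by omega)
        linarith
    · intro r hr hr'
      rw [hq, coeff_mul_p, if_pos hr, if_pos (by omega : 2 ≤ r)]
      rcases Nat.lt_or_ge r 6 with h6 | h6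
      · interval_cases r
        · have := hnn 3 (by norm_num)
          norm_num [h0, h1]; linarith
        · have := hnn 4 (by norm_num)
          norm_num [h1, h2]; linarith
        · have a3 := hnn 3 (by norm_num)
          have a5 := hnn 5 (by norm_num)
          norm_num [h2]; linarith
      · have e3 : 0 < q.coeff (r - 3) := hpos _ (by omega) (by omega)
        have e2 : 0 ≤ q.coeff (r - 2) := hnn _ (by omega)
        have e0 : 0 ≤ q.coeff r := hnn _ (by omega)
        linarith

theorem coefficients_of_f_mul_p_pow (s : ℕ) :
    let f : Polynomial ℚ := C (13 / 6) * X ^ 3 + X ^ 2 - C (1 / 6) * X + 1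
    let p : Polynomial ℚ := 2 * X ^ 3 + X ^ 2 + 1
    (f * p ^ s).coeff 1 = -1 / 6 ∧
    (f * p ^ s).coeff 2 = (s : ℚ) + 1 ∧
    (f * p ^ s).coeff 0 = 1 ∧
    ∀ r : ℕ, 3 ≤ r → r ≤ 3 * s + 3 → 0 < (f * p ^ s).coeff r := by
  obtain ⟨h0, h1, h2, _, hpos⟩ := main_aux s
  exact ⟨h1, h2, h0, hpos⟩
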